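/- Let k be an odd positive integer, and let a_1,…,a_k, b_1,…,b_k be Boolean values with a_i ≠ b_i for all i. Then the following formula X_k is satisfied if and only if the number of indices i with a_i = true is even: X_k is the conjunction of (1) for every subset S of {1,…,k} of even cardinality, the clause (⋁_{i∈S} a_i) ∨ (⋁_{i∉S} b_i), and (2) for every i, the clause (a_i ∨ b_i). -/
import Mathlib


/-- For odd `k` and Booleans `a i ≠ b i`, the CFI subformula `X_k` — consisting of the
clause `(⋁_{i∈S} a_i) ∨ (⋁_{i∉S} b_i)` for every even-cardinality `S ⊆ {1,…,k}` and
the clauses `(a_i ∨ b_i)` — is satisfied iff the number of indices with `a_i = true`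
is even. -/
theorem Xk_sat_iff_even (k : ℕ) (hk : Odd k) (a b : Fin k → Bool)
    (hab : ∀ i, a i ≠ b i) :
    ((∀ S : Finset (Fin k), Even S.card →
        ((∃ i ∈ S, a i = true) ∨ (∃ i ∉ S, b i = true))) ∧
      (∀ i, a i = true ∨ b i = true)) ↔
      Even ((Finset.univ.filter fun i => a i = true).card) := by
  have hb : ∀ i, b i = !(a i) := by
    intro i
    have := hab i
    cases h : a i <;> cases h' : b i <;> simp_all
  set A := Finset.univ.filter fun i => a i = true with hA
  have hcard : A.card + Aᶜ.card = k := by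
    rw [Finset.card_add_card_compl]
    simp
  have hmemA : ∀ i, i ∈ A ↔ a i = true := by
    intro i; simp [hA]
  constructor
  · rintro ⟨h1, h2⟩
    by_contra hodd
    have hAc : Even Aᶜ.card := by
      rw [Nat.even_iff] at *
      rw [Nat.odd_iff] at hk
      omega
    rcases h1 Aᶜ hAc with ⟨i, hi, hai⟩ | ⟨i, hi, hbi⟩
    · rw [Finset.mem_compl, hmemA] at hi
      exact hi hai
    · rw [Finset.mem_compl, not_not, hmemA] at hi
      rw [hb, hi] at hbi
      simp at hbi
  · intro heven
    refine ⟨?_, ?_⟩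
    · intro S hS
      by_contra hc
      push_neg at hc
      obtain ⟨h1, h2⟩ := hc
      have hSA : S = Aᶜ := by
        ext i
        rw [Finset.mem_compl, hmemA]
        constructor
        · intro hi hai
          exact absurd hai (by simpa using h1 i hi)
        · intro hi
          by_contra hni
          have := h2 i hni
          rw [hb] at this
          cases h : a i
          · simp [h] at this
          · exact hi h
      rw [hSA] at hS
      rw [Nat.even_iff] at *
      rw [Nat.odd_iff] at hk
      omega
    · intro i
      rw [hb]
      cases a i <;> simp
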